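/- Let B_h, B_v be M×N matrices with entries in {1, i, −1, −i} such that (a) they form a periodic complementary pair, (b) B_h ⋆ B_v = B_v ⋆ B_h, and (c) B_h(k,ℓ) = ±B_v(k,ℓ) for every entry. Then A = (B_h + B_v)/2 + ((B_h − B_v)/2)·j is a perfect quaternion array whose entries all lie in {±1, ±i, ±j, ±k}. -/

import Mathlib

noncomputable section
open scoped BigOperators

/-- Embedding of ℂ into the quaternions (zero j and k components). -/
def cq (z : ℂ) : Quaternion ℝ := ⟨z.re, z.im, 0, 0⟩

/-- The quaternion unit i. -/
def qi : Quaternion ℝ := ⟨0, 1, 0, 0⟩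

/-- The quaternion unit j. -/
def qj : Quaternion ℝ := ⟨0, 0, 1, 0⟩

/-- The quaternion unit k. -/
def qk : Quaternion ℝ := ⟨0, 0, 0, 1⟩

/-- Conjugate-free periodic cross-correlation of quaternion matrices. -/
def qcorr {M N : ℕ} [NeZero M] [NeZero N]
    (X Y : Matrix (ZMod M) (ZMod N) (Quaternion ℝ)) :
    Matrix (ZMod M) (ZMod N) (Quaternion ℝ) :=
  fun m n => ∑ k, ∑ l, X k l * Y (k + m) (l + n)

/-- Right periodic autocorrelation of a quaternion matrix. -/
def Rq {M N : ℕ} [NeZero M] [NeZero N]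
    (A : Matrix (ZMod M) (ZMod N) (Quaternion ℝ)) :
    Matrix (ZMod M) (ZMod N) (Quaternion ℝ) :=
  qcorr A (fun k l => star (A k l))

/-- Conjugate-free periodic cross-correlation of complex matrices. -/
def ccorr {M N : ℕ} [NeZero M] [NeZero N]
    (X Y : Matrix (ZMod M) (ZMod N) ℂ) : Matrix (ZMod M) (ZMod N) ℂ :=
  fun m n => ∑ k, ∑ l, X k l * Y (k + m) (l + n)

/-- Complex 2D periodic autocorrelation. -/
def Rc {M N : ℕ} [NeZero M] [NeZero N]
    (A : Matrix (ZMod M) (ZMod N) ℂ) : Matrix (ZMod M) (ZMod N) ℂ :=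
  ccorr A (fun k l => star (A k l))


section Aux

@[simp] lemma cq_re' (z : ℂ) : (cq z).re = z.re := rfl
@[simp] lemma cq_imI' (z : ℂ) : (cq z).imI = z.im := rfl
@[simp] lemma cq_imJ' (z : ℂ) : (cq z).imJ = 0 := rfl
@[simp] lemma cq_imK' (z : ℂ) : (cq z).imK = 0 := rfl
@[simp] lemma qi_re' : qi.re = 0 := rfl
@[simp] lemma qi_imI' : qi.imI = 1 := rfl
@[simp] lemma qi_imJ' : qi.imJ = 0 := rfl
@[simp] lemma qi_imK' : qi.imK = 0 := rfl
@[simp] lemma qj_re' : qj.re = 0 := rfl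
@[simp] lemma qj_imI' : qj.imI = 0 := rfl
@[simp] lemma qj_imJ' : qj.imJ = 1 := rfl
@[simp] lemma qj_imK' : qj.imK = 0 := rfl
@[simp] lemma qk_re' : qk.re = 0 := rfl
@[simp] lemma qk_imI' : qk.imI = 0 := rfl
@[simp] lemma qk_imJ' : qk.imJ = 0 := rfl
@[simp] lemma qk_imK' : qk.imK = 1 := rfl
@[simp] lemma q0_re' : (0 : Quaternion ℝ).re = 0 := rfl
@[simp] lemma q0_imI' : (0 : Quaternion ℝ).imI = 0 := rfl
@[simp] lemma q0_imJ' : (0 : Quaternion ℝ).imJ = 0 := rfl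
@[simp] lemma q0_imK' : (0 : Quaternion ℝ).imK = 0 := rfl
@[simp] lemma q1_re' : (1 : Quaternion ℝ).re = 1 := rfl
@[simp] lemma q1_imI' : (1 : Quaternion ℝ).imI = 0 := rfl
@[simp] lemma q1_imJ' : (1 : Quaternion ℝ).imJ = 0 := rfl
@[simp] lemma q1_imK' : (1 : Quaternion ℝ).imK = 0 := rfl

lemma cq_add' (z w : ℂ) : cq (z + w) = cq z + cq w := by
  ext <;> simp

lemma cq_sub' (z w : ℂ) : cq (z - w) = cq z - cq w := by
  ext <;> simp

lemma cq_sum' {ι : Type*} (s : Finset ι) (f : ι → ℂ) :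
    cq (∑ x ∈ s, f x) = ∑ x ∈ s, cq (f x) := by
  classical
  induction s using Finset.induction_on with
  | empty => ext <;> simp
  | insert _ _ h ih => simp [Finset.sum_insert h, cq_add', ih]

lemma prod_lemma' (c d c' d' : ℂ) :
    (cq c + cq d * qj) * star (cq c' + cq d' * qj)
      = cq (c * (starRingEnd ℂ) c' + d * (starRingEnd ℂ) d') + cq (d * c' - c * d') * qj := by
  ext <;>
    simp [Quaternion.re_mul, Quaternion.imI_mul, Quaternion.imJ_mul,
      Quaternion.imK_mul, Complex.mul_re, Complex.mul_im] <;> ring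

lemma dsum_add {M N : ℕ} [NeZero M] [NeZero N] (f g : ZMod M → ZMod N → ℂ) :
    ((∑ k, ∑ l, f k l) + ∑ k, ∑ l, g k l) = ∑ k, ∑ l, (f k l + g k l) := by
  rw [← Finset.sum_add_distrib]
  exact Finset.sum_congr rfl fun k _ => (Finset.sum_add_distrib).symm

lemma dsum_sub {M N : ℕ} [NeZero M] [NeZero N] (f g : ZMod M → ZMod N → ℂ) :
    ((∑ k, ∑ l, f k l) - ∑ k, ∑ l, g k l) = ∑ k, ∑ l, (f k l - g k l) := by
  rw [← Finset.sum_sub_distrib]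
  exact Finset.sum_congr rfl fun k _ => (Finset.sum_sub_distrib _ _).symm

lemma dsum_mul_left {M N : ℕ} [NeZero M] [NeZero N] (c : ℂ) (f : ZMod M → ZMod N → ℂ) :
    (c * ∑ k, ∑ l, f k l) = ∑ k, ∑ l, c * f k l := by
  rw [Finset.mul_sum]
  exact Finset.sum_congr rfl fun k _ => Finset.mul_sum _ _ _

end Aux

theorem basic_unit_pqa_from_quaternary_pcp {M N : ℕ} [NeZero M] [NeZero N]
    (Bh Bv : Matrix (ZMod M) (ZMod N) ℂ)
    (halphh : ∀ k l, Bh k l ∈ ({1, Complex.I, -1, -Complex.I} : Set ℂ))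
    (halphv : ∀ k l, Bv k l ∈ ({1, Complex.I, -1, -Complex.I} : Set ℂ))
    (hpcp : ∀ m n, (m, n) ≠ (0, 0) → Rc Bh m n + Rc Bv m n = 0)
    (hcomm : ccorr Bh Bv = ccorr Bv Bh)
    (hsign : ∀ k l, Bh k l = Bv k l ∨ Bh k l = -Bv k l) :
    (∀ m n, (m, n) ≠ (0, 0) →
      Rq (fun k l => cq ((Bh k l + Bv k l) / 2) + cq ((Bh k l - Bv k l) / 2) * qj) m n = 0) ∧
    (∀ k l, cq ((Bh k l + Bv k l) / 2) + cq ((Bh k l - Bv k l) / 2) * qj ∈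
      ({1, -1, qi, -qi, qj, -qj, qk, -qk} : Set (Quaternion ℝ))) := by
  classical
  set C : Matrix (ZMod M) (ZMod N) ℂ := fun k l => (Bh k l + Bv k l) / 2 with hC
  set D : Matrix (ZMod M) (ZMod N) ℂ := fun k l => (Bh k l - Bv k l) / 2 with hD
  constructor
  · intro m n hmn
    have key : Rq (fun k l => cq (C k l) + cq (D k l) * qj) m n
        = cq (Rc C m n + Rc D m n) + cq (ccorr D C m n - ccorr C D m n) * qj := by
      simp only [Rq, qcorr, Rc, ccorr]
      rw [show (∑ k, ∑ l, (cq (C k l) + cq (D k l) * qj) *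
            star (cq (C (k + m) (l + n)) + cq (D (k + m) (l + n)) * qj))
          = ∑ k, ∑ l, (cq (C k l * (starRingEnd ℂ) (C (k + m) (l + n))
              + D k l * (starRingEnd ℂ) (D (k + m) (l + n)))
            + cq (D k l * C (k + m) (l + n) - C k l * D (k + m) (l + n)) * qj) from
          Finset.sum_congr rfl fun k _ => Finset.sum_congr rfl fun l _ => prod_lemma' _ _ _ _]
      simp only [RCLike.star_def, cq_add', cq_sub', cq_sum', Finset.sum_add_distrib,
        Finset.sum_sub_distrib, Finset.sum_mul, sub_mul, add_mul]
    rw [key]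
    have h1 : Rc C m n + Rc D m n = 0 := by
      have hz := hpcp m n hmn
      simp only [Rc, ccorr] at hz ⊢
      rw [dsum_add] at hz ⊢
      calc (∑ k, ∑ l, (C k l * star (C (k + m) (l + n)) + D k l * star (D (k + m) (l + n))))
          = (1/2 : ℂ) * ∑ k, ∑ l, (Bh k l * star (Bh (k + m) (l + n))
              + Bv k l * star (Bv (k + m) (l + n))) := by
            rw [dsum_mul_left]
            refine Finset.sum_congr rfl fun k _ => Finset.sum_congr rfl fun l _ => ?_
            simp only [hC, hD, RCLike.star_def, map_div₀, map_add, map_sub, map_ofNat]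
            ring
        _ = 0 := by rw [hz, mul_zero]
    have h2 : ccorr D C m n - ccorr C D m n = 0 := by
      have hc := congrFun (congrFun hcomm m) n
      simp only [ccorr] at hc ⊢
      rw [dsum_sub]
      calc (∑ k, ∑ l, (D k l * C (k + m) (l + n) - C k l * D (k + m) (l + n)))
          = (1/2 : ℂ) * ((∑ k, ∑ l, Bh k l * Bv (k + m) (l + n))
              - ∑ k, ∑ l, Bv k l * Bh (k + m) (l + n)) := by
            rw [dsum_sub, dsum_mul_left]
            refine Finset.sum_congr rfl fun k _ => Finset.sum_congr rfl fun l _ => ?_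
            simp only [hC, hD]
            ring
        _ = 0 := by rw [hc, sub_self, mul_zero]
    rw [h1, h2]
    ext <;> simp [Quaternion.re_mul, Quaternion.imI_mul, Quaternion.imJ_mul,
      Quaternion.imK_mul]
  · intro k l
    have cq0 : cq 0 = 0 := by ext <;> simp
    have cq1 : cq 1 = 1 := by ext <;> simp
    have cqI : cq Complex.I = qi := by ext <;> simp
    have cqneg : ∀ z, cq (-z) = -cq z := fun z => by ext <;> simp
    have q1j : (1 : Quaternion ℝ) * qj = qj := one_mul _
    have qij : qi * qj = qk := by
      ext <;> simp [Quaternion.re_mul, Quaternion.imI_mul,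
        Quaternion.imJ_mul, Quaternion.imK_mul]
    rcases hsign k l with hs | hs
    · have e1 : (Bh k l + Bv k l) / 2 = Bh k l := by rw [← hs]; ring
      have e2 : (Bh k l - Bv k l) / 2 = 0 := by rw [← hs]; ring
      rw [e1, e2, cq0, zero_mul, add_zero]
      rcases halphh k l with h | h | h | h <;> rw [h] <;>
        simp only [Set.mem_insert_iff, Set.mem_singleton_iff, cq1, cqneg, cqI] <;> tauto
    · have e1 : (Bh k l + Bv k l) / 2 = 0 := by rw [hs]; ring
      have e2 : (Bh k l - Bv k l) / 2 = Bh k l := by rw [hs]; ring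
      rw [e1, e2, cq0, zero_add]
      rcases halphh k l with h | h | h | h <;> rw [h] <;>
        simp only [Set.mem_insert_iff, Set.mem_singleton_iff, cq1, cqneg, cqI, q1j,
          qij, neg_mul] <;> tauto
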